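/- In the Klein bottle group G₀ = ⟨u, v | u⁻¹vu = v⁻¹⟩, for m ≥ 1 let A = P ∪ vuQ where P = {uⁱ : 0 ≤ i ≤ 2m} and Q = {u²ⁱ : 0 ≤ i ≤ m-1}. Then |A| = 3m + 1 and |A²| = 10m - 1. -/

import Mathlib

open Pointwise

open Multiplicative SemidirectProduct

noncomputable section

def negA : MulAut (Multiplicative ℤ) := MulEquiv.inv (Multiplicative ℤ)

def φK : Multiplicative ℤ →* MulAut (Multiplicative ℤ) := zpowersHom _ negA

abbrev GK := (Multiplicative ℤ) ⋊[φK] (Multiplicative ℤ)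

def gEl (p i : ℤ) : GK := ⟨ofAdd p, ofAdd i⟩

def εz (n : ℤ) : ℤ := if Even n then 1 else -1

lemma εz_succ (n : ℤ) : εz (n + 1) = -εz n := by
  simp only [εz, Int.even_add_one]
  by_cases h : Even n <;> simp [h]

lemma εz_pred (n : ℤ) : εz (n - 1) = -εz n := by
  have := εz_succ (n - 1); simp at this; omega

lemma negA_inv : (negA⁻¹ : MulAut (Multiplicative ℤ)) = negA := by
  ext x
  rw [MulAut.inv_def]; apply congrArg toAdd; rw [MulEquiv.symm_apply_eq]
  simp [negA]

lemma act (n k : ℤ) : (φK (ofAdd n)) (ofAdd k) = ofAdd (εz n * k) := by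
  have h : ∀ k : ℤ, negA (ofAdd k) = ofAdd (-k) := fun k => by
    simp [negA, MulEquiv.inv_apply]
  have key : ∀ n k : ℤ, (negA ^ n) (ofAdd k) = ofAdd (εz n * k) := by
    intro n
    induction n using Int.induction_on with
    | zero => intro k; simp [εz]
    | succ n ih =>
      intro k
      rw [zpow_add_one, MulAut.mul_apply, h, ih, εz_succ]
      ring_nf
    | pred n ih =>
      intro k
      rw [zpow_sub_one, MulAut.mul_apply, negA_inv, h, ih, εz_pred]
      ring_nf
  rw [show φK (ofAdd n) = negA ^ n by simp [φK, zpowersHom_apply]]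
  exact key n k

lemma gEl_mul (p i q j : ℤ) :
    gEl p i * gEl q j = gEl (p + εz i * q) (i + j) := by
  refine SemidirectProduct.ext ?_ ?_
  · show ofAdd p * (φK (ofAdd i)) (ofAdd q) = ofAdd (p + εz i * q)
    rw [act, ← ofAdd_add]
  · show ofAdd i * ofAdd j = ofAdd (i + j)
    rw [← ofAdd_add]

lemma gEl_injPair {p i q j : ℤ} (h : gEl p i = gEl q j) : p = q ∧ i = j := by
  have h1 := congrArg SemidirectProduct.left h
  have h2 := congrArg SemidirectProduct.right h
  simp [gEl] at h1 h2
  exact ⟨h1, h2⟩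

lemma gEl_congr {p i q j : ℤ} (h1 : p = q) (h2 : i = j) : gEl p i = gEl q j := by
  rw [h1, h2]

lemma gEl_one : gEl 0 0 = 1 := by
  refine SemidirectProduct.ext ?_ ?_ <;> simp [gEl]



/-- The single relator `u⁻¹ v u v` of the Klein bottle group
`⟨u, v ∣ u⁻¹ v u = v⁻¹⟩`, with `u = of false`, `v = of true`. -/
def kleinRels : Set (FreeGroup Bool) :=
  {(FreeGroup.of false)⁻¹ * FreeGroup.of true * FreeGroup.of false * FreeGroup.of true}

/-- The Klein bottle group `⟨u, v ∣ u⁻¹ v u = v⁻¹⟩`. -/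
abbrev KleinGroup : Type := PresentedGroup kleinRels

/-- The generator `u` of the Klein bottle group. -/
def ku : KleinGroup := PresentedGroup.of false

/-- The generator `v` of the Klein bottle group. -/
def kv : KleinGroup := PresentedGroup.of true


lemma gEl01_inv : (gEl 0 1)⁻¹ = gEl 0 (-1) := by
  apply inv_eq_of_mul_eq_one_right
  rw [gEl_mul, show (0 : ℤ) + εz 1 * 0 = 0 by ring, show (1 : ℤ) + -1 = 0 by ring]
  exact gEl_one

lemma hrel : ∀ r ∈ kleinRels, (FreeGroup.lift fun b => if b then gEl 1 0 else gEl 0 1) r = 1 := by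
  intro r hr
  simp only [kleinRels, Set.mem_singleton_iff] at hr
  subst hr
  simp only [map_mul, map_inv, FreeGroup.lift_apply_of, Bool.false_eq_true, if_false, if_true]
  rw [gEl01_inv, gEl_mul, gEl_mul, gEl_mul]
  rw [show gEl (0 + εz (-1) * 1 + εz (-1 + 0) * 0 + εz (-1 + 0 + 1) * 1) (-1 + 0 + 1 + 0) = gEl 0 0 from
    gEl_congr (by norm_num [εz, even_neg]) (by ring)]
  exact gEl_one

def fK : KleinGroup →* GK := PresentedGroup.toGroup hrel

lemma fK_ku : fK ku = gEl 0 1 := by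
  simp [fK, ku, PresentedGroup.toGroup.of]

lemma fK_kv : fK kv = gEl 1 0 := by
  simp [fK, kv, PresentedGroup.toGroup.of]

lemma krel0 : ku⁻¹ * kv * ku * kv = 1 := by
  have h : (PresentedGroup.mk kleinRels
      ((FreeGroup.of false)⁻¹ * FreeGroup.of true * FreeGroup.of false * FreeGroup.of true) : KleinGroup) = 1 :=
    (QuotientGroup.eq_one_iff _).mpr
      (Subgroup.subset_normalClosure (by simp [kleinRels]))
  simp only [map_mul, map_inv] at h; exact h

lemma krel1 : ku⁻¹ * kv * ku = kv⁻¹ := mul_eq_one_iff_eq_inv.mp krel0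

lemma krel2 : ku * kv * ku⁻¹ = kv⁻¹ := by
  have h : kv = ku * kv⁻¹ * ku⁻¹ := by
    conv_lhs => rw [show kv = ku * (ku⁻¹ * kv * ku) * ku⁻¹ by group]
    rw [krel1]
  calc ku * kv * ku⁻¹ = (ku * kv⁻¹ * ku⁻¹)⁻¹ := by group
    _ = kv⁻¹ := by rw [← h]

lemma conj_ku_kv : (MulAut.conj ku) kv = kv⁻¹ := by
  rw [MulAut.conj_apply]; exact krel2

lemma conj_ku_inv_kv : (MulAut.conj ku⁻¹) kv = kv⁻¹ := by
  rw [MulAut.conj_apply]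
  simpa using krel1

lemma conj_ku_zpow (n : ℤ) : (MulAut.conj (ku ^ n)) kv = kv ^ εz n := by
  induction n using Int.induction_on with
  | zero => simp [εz]
  | succ n ih =>
    rw [zpow_add_one, map_mul, MulAut.mul_apply, conj_ku_kv, map_inv, ih, εz_succ, zpow_neg]
  | pred n ih =>
    rw [zpow_sub_one, map_mul, MulAut.mul_apply, conj_ku_inv_kv, map_inv, ih, εz_pred, zpow_neg]

lemma hcompat : ∀ z : Multiplicative ℤ,
    ((zpowersHom KleinGroup kv).comp (MulEquiv.toMonoidHom (φK z)))
      = (MulEquiv.toMonoidHom (MulAut.conj ((zpowersHom KleinGroup ku) z))).comp (zpowersHom KleinGroup kv) := by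
  intro z
  apply MonoidHom.ext_mint
  simp only [MonoidHom.comp_apply, MulEquiv.coe_toMonoidHom]
  rw [show z = ofAdd (toAdd z) from rfl, act]
  simp only [zpowersHom_apply, toAdd_ofAdd, mul_one, zpow_one]
  rw [conj_ku_zpow]

noncomputable def gK : GK →* KleinGroup :=
  SemidirectProduct.lift (zpowersHom _ kv) (zpowersHom _ ku) hcompat

lemma gf_id : ∀ x : KleinGroup, gK (fK x) = x := by
  have h : gK.comp fK = MonoidHom.id KleinGroup := by
    apply PresentedGroup.ext
    intro b
    cases b
    · show gK (fK ku) = ku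
      rw [fK_ku]
      rw [show gEl 0 1 = SemidirectProduct.inr (ofAdd 1) by
        refine SemidirectProduct.ext ?_ ?_ <;> simp [gEl]]
      simp [gK, SemidirectProduct.lift_inr, zpowersHom_apply]
    · show gK (fK kv) = kv
      rw [fK_kv]
      rw [show gEl 1 0 = SemidirectProduct.inl (ofAdd 1) by
        refine SemidirectProduct.ext ?_ ?_ <;> simp [gEl]]
      simp [gK, SemidirectProduct.lift_inl, zpowersHom_apply]
  exact fun x => DFunLike.congr_fun h x

lemma fK_inj : Function.Injective fK :=
  Function.LeftInverse.injective gf_id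


open Pointwise

lemma gEl_pow (i : ℕ) : gEl 0 1 ^ i = gEl 0 (i : ℤ) := by
  induction i with
  | zero => simpa using gEl_one.symm
  | succ n ih => rw [pow_succ, ih, gEl_mul]; exact gEl_congr (by ring) (by push_cast; ring)

lemma εz_even {n : ℤ} (h : Even n) : εz n = 1 := if_pos h

lemma εz_odd {n : ℤ} (h : ¬ Even n) : εz n = -1 := if_neg h

def Sb (m : ℕ) : Set GK := (fun i : ℕ => gEl 0 (i : ℤ)) '' Set.Iio (2 * m + 1)
def Tb (m : ℕ) : Set GK := (fun i : ℕ => gEl 1 (2 * (i : ℤ) + 1)) '' Set.Iio m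
def B0 (m : ℕ) : Set GK := (fun s : ℕ => gEl 0 (s : ℤ)) '' Set.Iio (4 * m + 1)
def B1 (m : ℕ) : Set GK := (fun t : ℕ => gEl 1 ((t : ℤ) + 1)) '' Set.Iio (4 * m - 1)
def B2 (m : ℕ) : Set GK := (fun w : ℕ => gEl (-1) (2 * (w : ℤ) + 2)) '' Set.Iio (2 * m - 1)

lemma ncard_block (c : ℤ) (g : ℕ → ℤ) (hg : ∀ a b, g a = g b → a = b) (n : ℕ) :
    ((fun i : ℕ => gEl c (g i)) '' Set.Iio n).ncard = n := by
  rw [Set.ncard_image_of_injective _ (fun a b h => hg a b (gEl_injPair h).2),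
    ← Finset.coe_range, Set.ncard_coe_finset, Finset.card_range]

lemma finite_block (c : ℤ) (g : ℕ → ℤ) (n : ℕ) :
    ((fun i : ℕ => gEl c (g i)) '' Set.Iio n).Finite :=
  (Set.finite_Iio n).image _

lemma block_disjoint {c d : ℤ} (h : c ≠ d) (g g' : ℕ → ℤ) (n n' : ℕ) :
    Disjoint ((fun i : ℕ => gEl c (g i)) '' Set.Iio n)
      ((fun i : ℕ => gEl d (g' i)) '' Set.Iio n') := by
  rw [Set.disjoint_left]
  rintro x ⟨i, hi, rfl⟩ ⟨j, hj, hx⟩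
  exact h ((gEl_injPair hx).1).symm

lemma prodEq (m : ℕ) (hm : 1 ≤ m) :
    (Sb m ∪ Tb m) * (Sb m ∪ Tb m) = (B0 m ∪ B1 m) ∪ B2 m := by
  ext x
  simp only [Sb, Tb, B0, B1, B2, Set.mem_mul, Set.mem_union, Set.mem_image, Set.mem_Iio]
  constructor
  · rintro ⟨a, (⟨i, hi, rfl⟩ | ⟨i, hi, rfl⟩), b, (⟨j, hj, rfl⟩ | ⟨j, hj, rfl⟩), rfl⟩
    · -- SS
      exact Or.inl (Or.inl ⟨i + j, by omega,
        by rw [gEl_mul]; exact gEl_congr (by ring) (by push_cast; ring)⟩)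
    · -- ST
      rcases Nat.even_or_odd i with ⟨c, hc⟩ | ⟨c, hc⟩
      · exact Or.inl (Or.inr ⟨i + 2 * j, by omega,
          by rw [gEl_mul, εz_even ⟨(c : ℤ), by omega⟩]; exact gEl_congr (by ring) (by push_cast; omega)⟩)
      · exact Or.inr ⟨c + j, by omega,
          by rw [gEl_mul, εz_odd (fun ⟨r, hr⟩ => by omega)]; exact gEl_congr (by ring) (by push_cast; omega)⟩
    · -- TS
      exact Or.inl (Or.inr ⟨2 * i + j, by omega,
        by rw [gEl_mul]; exact gEl_congr (by ring) (by push_cast; omega)⟩)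
    · -- TT
      exact Or.inl (Or.inl ⟨2 * i + 2 * j + 2, by omega,
        by rw [gEl_mul, εz_odd (fun ⟨r, hr⟩ => by omega)]; exact gEl_congr (by ring) (by push_cast; omega)⟩)
  · rintro ((⟨s, hs, rfl⟩ | ⟨t, ht, rfl⟩) | ⟨w, hw, rfl⟩)
    · -- B0
      exact ⟨gEl 0 (min s (2 * m) : ℕ), Or.inl ⟨min s (2 * m), by omega, rfl⟩,
        gEl 0 ((s - min s (2 * m) : ℕ) : ℤ), Or.inl ⟨s - min s (2 * m), by omega, rfl⟩,
        by rw [gEl_mul]; exact gEl_congr (by ring) (by push_cast; omega)⟩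
    · -- B1
      have hex : ∃ i j : ℕ, i < 2 * m + 1 ∧ j < m ∧ 2 * j + 1 + i = t + 1 := by
        rcases le_or_gt (t + 1) (2 * m + 1) with h | h
        · exact ⟨t, 0, by omega, by omega, by omega⟩
        · rcases Nat.even_or_odd t with ⟨c, hc⟩ | ⟨c, hc⟩
          · exact ⟨2 * m, (t - 2 * m) / 2, by omega, by omega, by omega⟩
          · exact ⟨2 * m - 1, (t + 1 - 2 * m) / 2, by omega, by omega, by omega⟩
      obtain ⟨i, j, hi, hj, hsum⟩ := hex
      exact ⟨gEl 1 (2 * (j : ℤ) + 1), Or.inr ⟨j, hj, rfl⟩, gEl 0 (i : ℤ), Or.inl ⟨i, hi, rfl⟩,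
        by rw [gEl_mul]; exact gEl_congr (by ring) (by push_cast; omega)⟩
    · -- B2
      have hex : ∃ i j : ℕ, i < 2 * m + 1 ∧ j < m ∧ (∃ c, i = 2 * c + 1) ∧ i + (2 * j + 1) = 2 * w + 2 := by
        rcases lt_or_ge w m with h | h
        · exact ⟨1, w, by omega, by omega, ⟨0, by omega⟩, by omega⟩
        · exact ⟨2 * (w - m) + 3, m - 1, by omega, by omega, ⟨w - m + 1, by omega⟩, by omega⟩
      obtain ⟨i, j, hi, hj, ⟨c, hc⟩, hsum⟩ := hex
      exact ⟨gEl 0 (i : ℤ), Or.inl ⟨i, hi, rfl⟩, gEl 1 (2 * (j : ℤ) + 1), Or.inr ⟨j, hj, rfl⟩,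
        by rw [gEl_mul, εz_odd (fun ⟨r, hr⟩ => by omega)]; exact gEl_congr (by ring) (by push_cast; omega)⟩

theorem stmt14 (m : ℕ) (hm : 1 ≤ m)
    (P : Set KleinGroup) (hP : P = {x | ∃ i ≤ 2 * m, x = ku ^ i})
    (Q : Set KleinGroup) (hQ : Q = {x | ∃ i < m, x = ku ^ (2 * i)})
    (A : Set KleinGroup) (hA : A = P ∪ (fun q => kv * ku * q) '' Q) :
    A.ncard = 3 * m + 1 ∧ (A * A).ncard = 10 * m - 1 := by
  have hP' : P = (fun i : ℕ => ku ^ i) '' Set.Iio (2 * m + 1) := by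
    rw [hP]; ext x
    simp only [Set.mem_setOf_eq, Set.mem_image, Set.mem_Iio, Nat.lt_succ_iff]
    constructor
    · rintro ⟨i, hi, rfl⟩; exact ⟨i, hi, rfl⟩
    · rintro ⟨i, hi, rfl⟩; exact ⟨i, hi, rfl⟩
  have hQ' : (fun q => kv * ku * q) '' Q = (fun i : ℕ => kv * ku ^ (2 * i + 1)) '' Set.Iio m := by
    rw [hQ]; ext x
    simp only [Set.mem_image, Set.mem_setOf_eq, Set.mem_Iio]
    constructor
    · rintro ⟨q, ⟨i, hi, rfl⟩, rfl⟩
      exact ⟨i, hi, by rw [pow_succ', ← mul_assoc]⟩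
    · rintro ⟨i, hi, rfl⟩
      exact ⟨ku ^ (2 * i), ⟨i, hi, rfl⟩, by rw [pow_succ', ← mul_assoc]⟩
  have hfP : fK '' P = Sb m := by
    rw [hP', Set.image_image, Sb]
    exact Set.image_congr fun i _ => by rw [map_pow, fK_ku, gEl_pow]
  have hfQ : fK '' ((fun q => kv * ku * q) '' Q) = Tb m := by
    rw [hQ', Set.image_image, Tb]
    refine Set.image_congr fun i _ => ?_
    rw [map_mul, fK_kv, map_pow, fK_ku, gEl_pow, gEl_mul]
    exact gEl_congr (by ring) (by push_cast; ring)
  have hImg : fK '' A = Sb m ∪ Tb m := by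
    rw [hA, Set.image_union, hfP, hfQ]
  have hST : Disjoint (Sb m) (Tb m) := block_disjoint (by norm_num) _ _ _ _
  have hSn : (Sb m).ncard = 2 * m + 1 := ncard_block 0 _ (fun a b h => by omega) _
  have hTn : (Tb m).ncard = m := ncard_block 1 _ (fun a b h => by omega) _
  constructor
  · rw [← Set.ncard_image_of_injective A fK_inj, hImg,
      Set.ncard_union_eq hST (finite_block _ _ _) (finite_block _ _ _), hSn, hTn]
    omega
  · have d01 : Disjoint (B0 m) (B1 m) := block_disjoint (by norm_num) _ _ _ _
    have d02 : Disjoint (B0 m) (B2 m) := block_disjoint (by norm_num) _ _ _ _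
    have d12 : Disjoint (B1 m) (B2 m) := block_disjoint (by norm_num) _ _ _ _
    have f0 : (B0 m).Finite := finite_block _ _ _
    have f1 : (B1 m).Finite := finite_block _ _ _
    have f2 : (B2 m).Finite := finite_block _ _ _
    have n0 : (B0 m).ncard = 4 * m + 1 := ncard_block 0 _ (fun a b h => by omega) _
    have n1 : (B1 m).ncard = 4 * m - 1 := ncard_block 1 _ (fun a b h => by omega) _
    have n2 : (B2 m).ncard = 2 * m - 1 := ncard_block (-1) _ (fun a b h => by omega) _
    rw [← Set.ncard_image_of_injective (A * A) fK_inj, Set.image_mul, hImg, prodEq m hm,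
      Set.ncard_union_eq ((Set.disjoint_union_left).mpr ⟨d02, d12⟩) (f0.union f1) f2,
      Set.ncard_union_eq d01 f0 f1, n0, n1, n2]
    omega

end
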